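/- For every integer a, the following identity holds in the power series ring (ℤ[q,q⁻¹])[[t]]: (∑_{r≥0} [r+1]_{q^a} [r+1]_q² t^r) · (1−t)(1−qt)(1−q²t)(1−q^a t)(1−q^{a+1} t)(1−q^{a+2} t) = 1 + q(q^a+1)t − 2(q²+q+1)q^{a+1}t² + (q^a+1)q^{a+3}t³ + q^{2a+4}t⁴. -/

import Mathlib

open PowerSeries LaurentPolynomial

/-- The `q`-integer `[k]_{q^a} = ∑_{i=0}^{k−1} q^{ia}` as a Laurent polynomial in `q`. -/
noncomputable def qInt (a : ℤ) (k : ℕ) : LaurentPolynomial ℤ :=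
  ∑ i ∈ Finset.range k, T ((i : ℤ) * a)

private lemma geom' (x : LaurentPolynomial ℤ) :
    (PowerSeries.mk fun n => x ^ n) * (1 - PowerSeries.C (R := LaurentPolynomial ℤ) x * X) = 1 := by
  ext n : 1
  cases n with
  | zero => simp
  | succ n =>
    rw [mul_sub, mul_one, map_sub, mul_left_comm, coeff_C_mul, coeff_succ_mul_X]
    simp [pow_succ, mul_comm]

private lemma H_eq (a : ℤ) (x : LaurentPolynomial ℤ) :
    (PowerSeries.mk fun r => qInt a (r + 1) * x ^ r) =
      (PowerSeries.mk fun n => (T a * x) ^ n) * PowerSeries.mk fun n => x ^ n := by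
  ext n : 1
  rw [coeff_mul]
  simp only [coeff_mk]
  rw [Finset.Nat.sum_antidiagonal_eq_sum_range_succ (fun i j => (T a * x) ^ i * x ^ j)]
  rw [qInt, Finset.sum_mul]
  refine Finset.sum_congr rfl fun i hi => ?_
  rw [Finset.mem_range] at hi
  rw [mul_pow, T_pow, mul_assoc, ← pow_add, Nat.add_sub_cancel' (by omega : i ≤ n)]

private lemma H_mul (a : ℤ) (x : LaurentPolynomial ℤ) :
    (PowerSeries.mk fun r => qInt a (r + 1) * x ^ r) *
      ((1 - PowerSeries.C (R := LaurentPolynomial ℤ) x * X) * (1 - PowerSeries.C (R := LaurentPolynomial ℤ) (T a * x) * X)) = 1 := by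
  rw [H_eq, mul_comm (1 - PowerSeries.C (R := LaurentPolynomial ℤ) x * X), mul_mul_mul_comm, geom', geom', one_mul]

private lemma telescope (a : ℤ) (k : ℕ) :
    (T a - 1) * qInt a k = T ((k : ℤ) * a) - 1 := by
  induction k with
  | zero => simp [qInt]
  | succ k ih =>
    rw [qInt, Finset.sum_range_succ, ← qInt, mul_add, ih]
    rw [sub_mul, one_mul, ← T_add]
    push_cast
    ring_nf

private lemma Tone_sub_one_ne : (T 1 - 1 : LaurentPolynomial ℤ) ≠ 0 := by
  intro h
  have h1 : (T 1 - 1 : LaurentPolynomial ℤ).coeff 1 = 0 := by rw [h]; simp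
  have h0 : (1 : LaurentPolynomial ℤ).coeff 1 = 0 := by
    rw [← LaurentPolynomial.T_zero, LaurentPolynomial.T_apply]; simp
  simp [LaurentPolynomial.T_apply, h0] at h1

private lemma mkf (a : ℤ) :
    PowerSeries.C (R := LaurentPolynomial ℤ) ((T 1 - 1) ^ 2) *
        PowerSeries.mk (fun r : ℕ => qInt a (r + 1) * qInt 1 (r + 1) ^ 2) =
      PowerSeries.C (R := LaurentPolynomial ℤ) (T 2) *
          PowerSeries.mk (fun r => qInt a (r + 1) * T 2 ^ r) -
        PowerSeries.C (R := LaurentPolynomial ℤ) (2 * T 1) *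
          PowerSeries.mk (fun r => qInt a (r + 1) * T 1 ^ r) +
        PowerSeries.mk (fun r => qInt a (r + 1) * (1 : LaurentPolynomial ℤ) ^ r) := by
  ext n : 1
  have ht := telescope 1 (n + 1)
  push_cast at ht
  have e1 : (T 1 : LaurentPolynomial ℤ) * T 1 ^ n = T ((n : ℤ) + 1) := by
    rw [T_pow, ← T_add]; ring_nf
  have e2 : (T 2 : LaurentPolynomial ℤ) * T 2 ^ n = T ((n : ℤ) + 1) ^ 2 := by
    rw [sq, T_pow, ← T_add, ← T_add]; congr 1; ring
  simp only [map_sub, map_add, map_mul, mul_assoc, coeff_C_mul, coeff_mk, one_pow, mul_one]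
  rw [mul_one] at ht
  linear_combination qInt a (n + 1) *
      ((T 1 - 1) * qInt 1 (n + 1) + T ((n : ℤ) + 1) - 1) * ht -
    qInt a (n + 1) * e2 + 2 * qInt a (n + 1) * e1

/-- For every integer `a`:
`(∑_{r≥0} [r+1]_{q^a} [r+1]_q² t^r) · (1−t)(1−qt)(1−q²t)(1−qᵃt)(1−q^{a+1}t)(1−q^{a+2}t)
 = 1 + q(qᵃ+1)t − 2(q²+q+1)q^{a+1}t² + (qᵃ+1)q^{a+3}t³ + q^{2a+4}t⁴`
as formal power series in `t` with coefficients in `ℤ[q,q⁻¹]`. -/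
theorem qInt_product_series_a11 (a : ℤ) :
    (PowerSeries.mk fun r : ℕ => qInt a (r + 1) * qInt 1 (r + 1) ^ 2) *
      ((1 - X) * (1 - PowerSeries.C (R := LaurentPolynomial ℤ) (T 1) * X) *
       (1 - PowerSeries.C (R := LaurentPolynomial ℤ) (T 2) * X) *
       (1 - PowerSeries.C (R := LaurentPolynomial ℤ) (T a) * X) *
       (1 - PowerSeries.C (R := LaurentPolynomial ℤ) (T (a + 1)) * X) *
       (1 - PowerSeries.C (R := LaurentPolynomial ℤ) (T (a + 2)) * X)) =
    1 + PowerSeries.C (R := LaurentPolynomial ℤ) (T 1 * (T a + 1)) * X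
      - PowerSeries.C (R := LaurentPolynomial ℤ) (2 * (T 2 + T 1 + 1) * T (a + 1)) * X ^ 2
      + PowerSeries.C (R := LaurentPolynomial ℤ) ((T a + 1) * T (a + 3)) * X ^ 3
      + PowerSeries.C (R := LaurentPolynomial ℤ) (T (2 * a + 4)) * X ^ 4 := by
  have hc : (PowerSeries.C (R := LaurentPolynomial ℤ) ((T 1 - 1) ^ 2)) ≠ 0 := by
    intro h
    have h2 := congrArg (PowerSeries.constantCoeff (R := LaurentPolynomial ℤ)) h
    simp only [constantCoeff_C, map_zero] at h2
    exact pow_ne_zero 2 Tone_sub_one_ne h2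
  set_option synthInstance.maxHeartbeats 1000000 in
  apply mul_left_cancel₀ hc
  rw [← mul_assoc, mkf]
  have h0 := H_mul a 1
  have h1 := H_mul a (T 1)
  have h2 := H_mul a (T 2)
  have t2 : (T 2 : LaurentPolynomial ℤ) = T 1 * T 1 := by
    rw [show (2 : ℤ) = 1 + 1 by norm_num, T_add]
  have r1 : (T (a + 1) : LaurentPolynomial ℤ) = T a * T 1 := T_add a 1
  have r2 : (T (a + 2) : LaurentPolynomial ℤ) = T a * (T 1 * T 1) := by
    rw [T_add a 2, t2]
  have r3 : (T (a + 3) : LaurentPolynomial ℤ) = T a * (T 1 * (T 1 * T 1)) := by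
    rw [show a + 3 = a + 1 + 1 + 1 by ring, T_add, T_add, T_add]; ring
  have r4 : (T (2 * a + 4) : LaurentPolynomial ℤ) = T a * T a * (T 1 * T 1 * (T 1 * T 1)) := by
    rw [show 2 * a + 4 = a + 1 + 1 + (a + 1 + 1) by ring, T_add, T_add, T_add]; ring
  rw [t2] at h2 ⊢
  rw [r1, r2, r3, r4]
  simp only [one_pow, mul_one, map_one, map_mul, map_add, map_sub, map_pow, map_ofNat] at h0 h1 h2 ⊢
  linear_combination (norm := ring)
    (PowerSeries.C (R := LaurentPolynomial ℤ) (T 1) * PowerSeries.C (R := LaurentPolynomial ℤ) (T 1) *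
      ((1 - X) * (1 - PowerSeries.C (R := LaurentPolynomial ℤ) (T 1) * X) *
       (1 - PowerSeries.C (R := LaurentPolynomial ℤ) (T a) * X) *
       (1 - PowerSeries.C (R := LaurentPolynomial ℤ) (T a) *
            PowerSeries.C (R := LaurentPolynomial ℤ) (T 1) * X))) * h2
    - (2 * PowerSeries.C (R := LaurentPolynomial ℤ) (T 1) *
      ((1 - X) * (1 - PowerSeries.C (R := LaurentPolynomial ℤ) (T 1) *
            PowerSeries.C (R := LaurentPolynomial ℤ) (T 1) * X) *
       (1 - PowerSeries.C (R := LaurentPolynomial ℤ) (T a) * X) *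
       (1 - PowerSeries.C (R := LaurentPolynomial ℤ) (T a) *
            (PowerSeries.C (R := LaurentPolynomial ℤ) (T 1) * PowerSeries.C (R := LaurentPolynomial ℤ) (T 1)) * X))) * h1
    + ((1 - PowerSeries.C (R := LaurentPolynomial ℤ) (T 1) * X) *
       (1 - PowerSeries.C (R := LaurentPolynomial ℤ) (T 1) *
            PowerSeries.C (R := LaurentPolynomial ℤ) (T 1) * X) *
       (1 - PowerSeries.C (R := LaurentPolynomial ℤ) (T a) *
            PowerSeries.C (R := LaurentPolynomial ℤ) (T 1) * X) *
       (1 - PowerSeries.C (R := LaurentPolynomial ℤ) (T a) *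
            (PowerSeries.C (R := LaurentPolynomial ℤ) (T 1) * PowerSeries.C (R := LaurentPolynomial ℤ) (T 1)) * X)) * h0
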